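/- Let x₁, y₁, x₂, y₂, c ∈ ℝ and ξ ∈ ℂ. Put u₁ = x₁ + iy₁ and u₂ = x₂ + iy₂, and define z₁ = u₁ − ξū₂, z₂ = u₂ + ξū₁, and w = ic − (1/2)u₂ū₂ + (1/2)u₁ū₁ − ξū₁ū₂. Then Re(w) = (z̄₁z₁ − z₂z̄₂ + 2·Re(z₁z₂ξ̄))/(2 + 2ξξ̄). -/

import Mathlib

open ComplexConjugate in
theorem su31_model_defining_equation
    (x₁ y₁ x₂ y₂ c : ℝ) (ξ : ℂ)
    (u₁ u₂ z₁ z₂ w : ℂ)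
    (hu₁ : u₁ = (x₁ : ℂ) + Complex.I * (y₁ : ℂ))
    (hu₂ : u₂ = (x₂ : ℂ) + Complex.I * (y₂ : ℂ))
    (hz₁ : z₁ = u₁ - ξ * conj u₂)
    (hz₂ : z₂ = u₂ + ξ * conj u₁)
    (hw : w = Complex.I * (c : ℂ) - (1/2) * u₂ * conj u₂ + (1/2) * u₁ * conj u₁
        - ξ * conj u₁ * conj u₂) :
    (w.re : ℂ) = (conj z₁ * z₁ - z₂ * conj z₂
        + 2 * Complex.ofReal (z₁ * z₂ * conj ξ).re) / (2 + 2 * ξ * conj ξ) := by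
  have hd : (2 : ℂ) + 2 * ξ * conj ξ ≠ 0 := by
    rw [mul_assoc, Complex.mul_conj]
    have h0 : (0:ℝ) ≤ Complex.normSq ξ := Complex.normSq_nonneg ξ
    intro h
    have := congrArg Complex.re h
    simp at this
    nlinarith
  have hre : ∀ a : ℂ, (a.re : ℂ) = (a + conj a) / 2 := by
    intro a
    rw [Complex.add_conj]
    push_cast
    ring
  rw [hre w, hre (z₁ * z₂ * conj ξ)]
  have hd1 : (1:ℂ) + conj ξ * ξ ≠ 0 := by
    intro h; apply hd; linear_combination 2 * h
  field_simp
  rw [hz₁, hz₂, hw, hu₁, hu₂]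
  simp only [map_add, map_sub, map_mul, Complex.conj_conj, Complex.conj_I,
    Complex.conj_ofReal, map_one, map_div₀, map_ofNat]
  ring_nf
  simp [Complex.ext_iff]
  ring_nf
  constructor <;> trivial
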